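/- For every integer k ≥ 3, a linked k-cylinder of length twelve has a K_6 minor. -/

import Mathlib

open SimpleGraph

/-- `H` is a minor of `G`: branch sets. -/
def HasMinor {V : Type*} {W : Type*} (G : SimpleGraph V) (H : SimpleGraph W) : Prop :=
  ∃ B : W → Set V,
    (∀ w, (B w).Nonempty) ∧
    (∀ w, (G.induce (B w)).Connected) ∧
    (∀ w₁ w₂, w₁ ≠ w₂ → Disjoint (B w₁) (B w₂)) ∧
    (∀ w₁ w₂, H.Adj w₁ w₂ → ∃ v₁ ∈ B w₁, ∃ v₂ ∈ B w₂, G.Adj v₁ v₂)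

/-- Planarity, via Wagner's theorem: no `K₅` and no `K₃,₃` minor. -/
def IsPlanar {V : Type*} (G : SimpleGraph V) : Prop :=
  ¬ HasMinor G (⊤ : SimpleGraph (Fin 5)) ∧
  ¬ HasMinor G (completeBipartiteGraph (Fin 3) (Fin 3))

/-- A graph is apex if deleting some vertex leaves a planar graph. -/
def IsApex {V : Type*} (G : SimpleGraph V) : Prop :=
  ∃ v : V, IsPlanar (G.induce {u | u ≠ v})

/-- `G` is `k`-connected. -/
def IsKConnected {V : Type*} [Fintype V] (k : ℕ) (G : SimpleGraph V) : Prop :=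
  k < Fintype.card V ∧ ∀ X : Set V, X.ncard < k → (G.induce Xᶜ).Connected

/-- add an apex vertex over the set `S`. -/
def addApex {V : Type*} (G : SimpleGraph V) (S : Set V) : SimpleGraph (Option V) :=
  SimpleGraph.fromRel fun a b =>
    match a, b with
    | some u, some v => G.Adj u v
    | none, some v => v ∈ S
    | _, _ => False

/-- The linked k-cylinder of length 12: k disjoint paths of 12 vertices
(v^i_0, …, v^i_11), rungs joining consecutive paths (cyclically) at each level,
and two extra edges q₁ = (a₁,0)(b₁,11), q₂ = (a₂,0)(b₂,11). -/
def linkedCylinder12 (k : ℕ) (a₁ b₁ a₂ b₂ : Fin k) : SimpleGraph (Fin k × Fin 12) :=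
  SimpleGraph.fromRel fun p q =>
    (p.1 = q.1 ∧ (p.2 : ℕ) + 1 = (q.2 : ℕ)) ∨
    (p.2 = q.2 ∧ ((p.1 : ℕ) + 1) % k = (q.1 : ℕ)) ∨
    (p = (a₁, 0) ∧ q = (b₁, 11)) ∨
    (p = (a₂, 0) ∧ q = (b₂, 11))

section Aux
variable {V : Type*} {G : SimpleGraph V}

lemma chain_reach {S : Set V} :
    ∀ (b : V) (t : List V), (b :: t).Chain' G.Adj → ∀ (hS : ∀ x ∈ b :: t, x ∈ S),
    ∀ a (ha : a ∈ b :: t),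
    (G.induce S).Reachable ⟨b, hS b (List.mem_cons_self)⟩ ⟨a, hS a ha⟩ := by
  intro b t
  induction t generalizing b with
  | nil =>
    intro _ hS a ha
    rcases List.mem_singleton.mp ha with rfl
    exact SimpleGraph.Reachable.refl _
  | cons c t ih =>
    intro hch hS a ha
    have hadj : G.Adj b c := (List.isChain_cons_cons.mp hch).1
    have hch' : (c :: t).Chain' G.Adj := (List.isChain_cons_cons.mp hch).2
    have hS' : ∀ x ∈ c :: t, x ∈ S := fun x hx => hS x (List.mem_cons_of_mem _ hx)
    rcases List.mem_cons.mp ha with rfl | ha'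
    · exact SimpleGraph.Reachable.refl _
    · have h1 : (G.induce S).Adj ⟨b, hS b (List.mem_cons_self)⟩
          ⟨c, hS' c (List.mem_cons_self)⟩ := by
        simpa [SimpleGraph.comap_adj] using hadj
      exact h1.reachable.trans (ih c hch' hS' a ha')

lemma connected_of_list (l : List V) (hne : l ≠ []) (hch : l.Chain' G.Adj) :
    (G.induce {x | x ∈ l}).Connected := by
  rcases l with _ | ⟨b, t⟩
  · exact absurd rfl hne
  · rw [SimpleGraph.connected_iff]
    constructor
    · intro x y
      rcases x with ⟨x, hx⟩
      rcases y with ⟨y, hy⟩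
      have hS : ∀ z ∈ b :: t, z ∈ {x | x ∈ (b :: t : List V)} := fun z hz => hz
      exact (chain_reach b t hch hS x hx).symm.trans (chain_reach b t hch hS y hy)
    · exact ⟨⟨b, List.mem_cons_self⟩⟩

lemma hasMinor_of_lists (G : SimpleGraph V) (L : Fin 6 → List V)
    (h1 : ∀ u, L u ≠ [])
    (h2 : ∀ u, (L u).Chain' G.Adj)
    (h3 : ∀ u v : Fin 6, u ≠ v → ∀ x ∈ L u, x ∉ L v)
    (h4 : ∀ u v : Fin 6, u ≠ v → ∃ x ∈ L u, ∃ y ∈ L v, G.Adj x y) :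
    HasMinor G (⊤ : SimpleGraph (Fin 6)) := by
  refine ⟨fun u => {x | x ∈ L u}, ?_, ?_, ?_, ?_⟩
  · intro u
    rcases List.exists_mem_of_ne_nil _ (h1 u) with ⟨x, hx⟩
    exact ⟨x, hx⟩
  · intro u
    exact connected_of_list _ (h1 u) (h2 u)
  · intro u v huv
    rw [Set.disjoint_left]
    intro x hx
    exact h3 u v huv x hx
  · intro u v huv
    rcases h4 u v (by simpa using huv) with ⟨x, hx, y, hy, hxy⟩
    exact ⟨x, hx, y, hy, hxy⟩

lemma reach_mono_walk {A B : Set V} (hAB : A ⊆ B) :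
    ∀ {x y : ↥A} (_ : (G.induce A).Walk x y),
    (G.induce B).Reachable ⟨x.1, hAB x.2⟩ ⟨y.1, hAB y.2⟩ := by
  intro x y p
  induction p with
  | nil => exact SimpleGraph.Reachable.refl _
  | @cons a b c hadj p ih =>
    have h1 : (G.induce B).Adj ⟨a.1, hAB a.2⟩ ⟨b.1, hAB b.2⟩ := by exact hadj
    exact h1.reachable.trans ih

lemma reach_mono {A B : Set V} (hAB : A ⊆ B) {x y : V} (hx : x ∈ A) (hy : y ∈ A)
    (h : (G.induce A).Reachable ⟨x, hx⟩ ⟨y, hy⟩) :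
    (G.induce B).Reachable ⟨x, hAB hx⟩ ⟨y, hAB hy⟩ := by
  rcases h with ⟨p⟩
  exact reach_mono_walk hAB p

lemma hasMinor_pullback {V' W U : Type*} {G : SimpleGraph V'} {H : SimpleGraph W}
    {K : SimpleGraph U} (g : V' → W)
    (hfib : ∀ w : W, (G.induce (g ⁻¹' {w})).Connected)
    (hlift : ∀ w₁ w₂, H.Adj w₁ w₂ → ∃ v₁ v₂, g v₁ = w₁ ∧ g v₂ = w₂ ∧ G.Adj v₁ v₂)
    (hm : HasMinor H K) : HasMinor G K := by
  obtain ⟨B, hne, hconn, hdisj, hadj⟩ := hm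
  -- reachability within a single fiber, inside any superset
  have fibreach : ∀ (S : Set W) (x y : V') (_ : g x = g y) (hxS : x ∈ g ⁻¹' S)
      (hyS : y ∈ g ⁻¹' S), (G.induce (g ⁻¹' S)).Reachable ⟨x, hxS⟩ ⟨y, hyS⟩ := by
    intro S x y hxy hxS hyS
    have hx : x ∈ g ⁻¹' {g x} := rfl
    have hy : y ∈ g ⁻¹' {g x} := by
      simp only [Set.mem_preimage, Set.mem_singleton_iff]; exact hxy.symm
    have hsub : g ⁻¹' {g x} ⊆ g ⁻¹' S := by
      intro z hz
      simp only [Set.mem_preimage, Set.mem_singleton_iff] at hz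
      simp only [Set.mem_preimage, hz]
      exact hxS
    have := (hfib (g x)).preconnected ⟨x, hx⟩ ⟨y, hy⟩
    exact reach_mono hsub hx hy this
  have key : ∀ (S : Set W), (H.induce S).Connected → (G.induce (g ⁻¹' S)).Connected := by
    intro S hS
    have hlift2 : ∀ (w w' : S) (_ : (H.induce S).Walk w w') (x y : V')
        (_ : g x = w.1) (_ : g y = w'.1) (hxS : x ∈ g ⁻¹' S) (hyS : y ∈ g ⁻¹' S),
        (G.induce (g ⁻¹' S)).Reachable ⟨x, hxS⟩ ⟨y, hyS⟩ := by
      intro w w' p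
      induction p with
      | nil =>
        intro x y hx hy hxS hyS
        have : g x = g y := by rw [hx, hy]
        exact fibreach S x y this hxS hyS
      | @cons w u w' h p ih =>
        intro x y hx hy hxS hyS
        have hadj' : H.Adj w.1 u.1 := h
        rcases hlift _ _ hadj' with ⟨v₁, v₂, hv₁, hv₂, hvadj⟩
        have hv₁S : v₁ ∈ g ⁻¹' S := by
          simp only [Set.mem_preimage, hv₁]; exact w.2
        have hv₂S : v₂ ∈ g ⁻¹' S := by
          simp only [Set.mem_preimage, hv₂]; exact u.2
        have r1 : (G.induce (g ⁻¹' S)).Reachable ⟨x, hxS⟩ ⟨v₁, hv₁S⟩ :=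
          fibreach S x v₁ (by rw [hx, hv₁]) hxS hv₁S
        have r2 : (G.induce (g ⁻¹' S)).Adj ⟨v₁, hv₁S⟩ ⟨v₂, hv₂S⟩ := by
          simpa [SimpleGraph.comap_adj] using hvadj
        exact r1.trans (r2.reachable.trans (ih v₂ y hv₂ hy hv₂S hyS))
    rw [SimpleGraph.connected_iff]
    constructor
    · rintro ⟨x, hx⟩ ⟨y, hy⟩
      have hgx : g x ∈ S := hx
      have hgy : g y ∈ S := hy
      rcases hS.preconnected ⟨g x, hgx⟩ ⟨g y, hgy⟩ with ⟨p⟩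
      exact hlift2 _ _ p x y rfl rfl hx hy
    · rcases hS.nonempty with ⟨w, hw⟩
      rcases (hfib w).nonempty with ⟨v, hv⟩
      have : g v ∈ S := by
        have : g v = w := hv
        rw [this]; exact hw
      exact ⟨⟨v, this⟩⟩
  refine ⟨fun u => g ⁻¹' (B u), ?_, ?_, ?_, ?_⟩
  · intro u
    rcases hne u with ⟨w, hw⟩
    rcases (hfib w).nonempty with ⟨v, hv⟩
    exact ⟨v, by simp [Set.mem_preimage, show g v = w from hv, hw]⟩
  · intro u
    exact key _ (hconn u)
  · intro u₁ u₂ h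
    exact (hdisj u₁ u₂ h).preimage g
  · intro u₁ u₂ h
    rcases hadj u₁ u₂ h with ⟨w₁, hw₁, w₂, hw₂, hw⟩
    rcases hlift _ _ hw with ⟨v₁, v₂, hv₁, hv₂, hvadj⟩
    exact ⟨v₁, by simp [Set.mem_preimage, hv₁, hw₁], v₂, by simp [Set.mem_preimage, hv₂, hw₂], hvadj⟩
end Aux

section ChainP
def ChainP {α : Type*} (r : α → α → Prop) : List α → Prop
  | [] => True
  | [_] => True
  | a :: b :: t => r a b ∧ ChainP r (b :: t)

def decChainP {α : Type*} (r : α → α → Prop) [DecidableRel r] :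
    (l : List α) → Decidable (ChainP r l)
  | [] => isTrue trivial
  | [_] => isTrue trivial
  | _ :: b :: t => @instDecidableAnd _ _ _ (decChainP r (b :: t))

instance {α : Type*} (r : α → α → Prop) [DecidableRel r] (l : List α) :
    Decidable (ChainP r l) := decChainP r l

lemma ChainP.chain' {α : Type*} {r : α → α → Prop} :
    ∀ {l : List α}, ChainP r l → l.Chain' r
  | [], _ => List.isChain_nil
  | [_], _ => List.isChain_singleton _
  | _ :: b :: t, h => List.isChain_cons_cons.mpr ⟨h.1, ChainP.chain' (l := b :: t) h.2⟩
end ChainP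

instance (k : ℕ) (a₁ b₁ a₂ b₂ : Fin k) : DecidableRel (linkedCylinder12 k a₁ b₁ a₂ b₂).Adj :=
  fun p q => decidable_of_iff' _ (SimpleGraph.fromRel_adj _ p q)
def bsets : ℕ → ℕ → ℕ → ℕ → List (List (Fin 3 × Fin 12))
  | 0, 0, 1, 1 => [[(0,3), (0,4), (0,5), (0,6)], [(1,5), (1,4), (1,3), (2,3)], [(2,5), (2,6), (2,7)], [(1,6), (1,7)], [(0,7), (0,8), (0,9), (0,10), (0,11), (0,0), (0,1), (1,1), (1,2)], [(0,2), (2,2), (2,1), (2,0), (1,0), (1,11), (1,10), (1,9), (1,8), (2,8)]]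
  | 0, 0, 1, 2 => [[(0,3), (0,4), (0,5)], [(0,0), (0,1), (0,2)], [(1,2), (1,3)], [(0,11), (0,10), (0,9), (1,9), (1,8), (1,7), (1,6), (1,5), (1,4)], [(2,2), (2,3), (2,4)], [(0,6), (0,7), (0,8), (2,8), (2,9), (2,10), (2,11), (1,0), (1,1), (2,1)]]
  | 0, 1, 1, 0 => [[(0,4), (2,4), (2,5), (2,6), (2,7), (2,8), (0,8), (0,9), (0,10), (0,11)], [(2,2), (2,3)], [(1,5), (1,6), (1,7), (1,8), (1,9), (1,10), (1,11), (0,0), (0,1), (2,1)], [(1,0), (1,1), (1,2)], [(0,2), (0,3)], [(1,3), (1,4)]]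
  | 0, 1, 1, 2 => [[(1,7), (1,8), (1,9)], [(2,8), (2,9)], [(0,9), (0,10), (1,10), (1,11)], [(0,0), (0,1), (0,2), (0,3), (2,3), (2,4), (2,5), (2,6), (2,7)], [(0,7), (0,8)], [(0,6), (1,6), (1,5), (1,4), (1,3), (1,2), (2,2), (2,1), (2,0), (1,0), (2,11), (2,10)]]
  | 0, 2, 1, 0 => [[(0,4), (0,5)], [(0,6), (0,7), (0,8)], [(0,9), (0,10), (0,11), (1,0), (1,1), (1,2), (2,2), (2,3), (2,4)], [(0,3), (0,2), (0,1), (0,0), (2,11), (2,10), (2,9), (2,8), (2,7), (1,7)], [(1,4), (1,5), (1,6)], [(2,5), (2,6)]]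
  | 0, 2, 1, 1 => [[(0,9), (0,10)], [(1,8), (1,9), (1,10)], [(1,3), (1,4), (1,5), (2,5), (2,6), (2,7), (2,8), (2,9)], [(0,11), (1,11), (1,0), (1,1), (1,2)], [(0,0), (2,11), (2,10)], [(0,1), (0,2), (0,3), (0,4), (0,5), (0,6), (0,7), (0,8)]]
  | 0, 0, 2, 1 => [[(0,1), (0,0), (0,11), (0,10), (0,9), (0,8), (0,7), (0,6), (2,6)], [(2,3), (2,4), (2,5)], [(2,2), (2,1), (2,0), (1,11), (2,11)], [(1,4), (1,5), (1,6), (1,7), (2,7), (2,8), (2,9), (2,10)], [(0,2), (0,3), (0,4)], [(1,1), (1,2), (1,3)]]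
  | 0, 0, 2, 2 => [[(0,4), (0,5), (0,6), (0,7), (0,8)], [(1,2), (1,3), (1,4), (1,5)], [(2,5), (2,6), (2,7), (2,8), (2,9)], [(1,6), (1,7), (1,8), (1,9), (1,10), (2,10), (2,11), (2,0), (2,1)], [(0,9), (0,10), (0,11), (0,0), (1,0), (1,1)], [(0,1), (0,2), (2,2), (2,3), (2,4)]]
  | 0, 1, 2, 0 => [[(1,8), (1,9)], [(1,5), (1,6), (1,7), (2,7)], [(2,8), (2,9), (2,10)], [(0,7), (0,8)], [(0,6), (0,5), (0,4), (0,3), (0,2), (0,1), (0,0), (1,11), (1,10)], [(0,9), (0,10), (0,11), (2,0), (2,1), (2,2), (1,2), (1,3), (1,4)]]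
  | 0, 1, 2, 2 => [[(0,3), (0,4)], [(1,3), (2,3), (2,2), (2,1), (2,0), (2,11), (2,10), (2,9)], [(0,5), (0,6), (0,7), (0,8), (2,8)], [(1,4), (1,5)], [(2,4), (2,5)], [(0,2), (0,1), (0,0), (1,11), (1,10), (1,9), (1,8), (1,7), (1,6), (2,6)]]
  | 0, 2, 2, 0 => [[(1,4), (1,5), (1,6), (0,6), (0,7), (0,8), (1,8), (1,9), (1,10), (1,11)], [(0,2), (0,3), (0,4)], [(0,11), (2,0), (2,1), (2,2)], [(2,3), (2,4)], [(1,1), (0,1), (0,0), (2,11), (2,10), (2,9), (2,8), (2,7), (2,6), (2,5)], [(1,2), (1,3)]]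
  | 0, 2, 2, 1 => [[(2,7), (2,8), (2,9), (2,10)], [(1,5), (1,6), (1,7)], [(0,7), (0,8), (0,9), (0,10), (0,11)], [(1,8), (1,9), (1,10), (1,11), (2,0), (1,0), (1,1), (1,2), (1,3), (2,3)], [(1,4), (0,4), (0,3), (0,2), (0,1), (0,0), (2,11)], [(0,6), (2,6), (2,5), (2,4)]]
  | 1, 0, 0, 1 => [[(0,4), (2,4), (2,5), (2,6), (2,7), (2,8), (0,8), (0,9), (0,10), (0,11)], [(2,2), (2,3)], [(1,5), (1,6), (1,7), (1,8), (1,9), (1,10), (1,11), (0,0), (0,1), (2,1)], [(1,0), (1,1), (1,2)], [(0,2), (0,3)], [(1,3), (1,4)]]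
  | 1, 0, 0, 2 => [[(0,4), (0,5)], [(0,6), (0,7), (0,8)], [(0,9), (0,10), (0,11), (1,0), (1,1), (1,2), (2,2), (2,3), (2,4)], [(0,3), (0,2), (0,1), (0,0), (2,11), (2,10), (2,9), (2,8), (2,7), (1,7)], [(1,4), (1,5), (1,6)], [(2,5), (2,6)]]
  | 1, 1, 0, 0 => [[(0,3), (0,4), (0,5), (0,6)], [(1,5), (1,4), (1,3), (2,3)], [(2,5), (2,6), (2,7)], [(1,6), (1,7)], [(0,7), (0,8), (0,9), (0,10), (0,11), (0,0), (0,1), (1,1), (1,2)], [(0,2), (2,2), (2,1), (2,0), (1,0), (1,11), (1,10), (1,9), (1,8), (2,8)]]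
  | 1, 1, 0, 2 => [[(0,9), (0,10)], [(1,8), (1,9), (1,10)], [(1,3), (1,4), (1,5), (2,5), (2,6), (2,7), (2,8), (2,9)], [(0,11), (1,11), (1,0), (1,1), (1,2)], [(0,0), (2,11), (2,10)], [(0,1), (0,2), (0,3), (0,4), (0,5), (0,6), (0,7), (0,8)]]
  | 1, 2, 0, 0 => [[(0,3), (0,4), (0,5)], [(0,0), (0,1), (0,2)], [(1,2), (1,3)], [(0,11), (0,10), (0,9), (1,9), (1,8), (1,7), (1,6), (1,5), (1,4)], [(2,2), (2,3), (2,4)], [(0,6), (0,7), (0,8), (2,8), (2,9), (2,10), (2,11), (1,0), (1,1), (2,1)]]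
  | 1, 2, 0, 1 => [[(1,7), (1,8), (1,9)], [(2,8), (2,9)], [(0,9), (0,10), (1,10), (1,11)], [(0,0), (0,1), (0,2), (0,3), (2,3), (2,4), (2,5), (2,6), (2,7)], [(0,7), (0,8)], [(0,6), (1,6), (1,5), (1,4), (1,3), (1,2), (2,2), (2,1), (2,0), (1,0), (2,11), (2,10)]]
  | 1, 0, 2, 1 => [[(0,7), (0,8), (0,9)], [(1,9), (1,10)], [(0,6), (1,6), (1,5), (1,4), (2,4), (2,3), (2,2), (2,1), (2,0), (1,11)], [(0,10), (0,11), (1,0)], [(2,9), (2,10), (2,11)], [(1,1), (1,2), (1,3), (0,3), (0,4), (0,5), (2,5), (2,6), (2,7), (2,8), (1,8)]]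
  | 1, 0, 2, 2 => [[(2,8), (2,9), (2,10)], [(0,10), (0,11), (1,0), (1,1), (1,2)], [(0,3), (0,4), (0,5), (0,6), (0,7), (0,8), (0,9)], [(2,3), (2,2), (0,2), (0,1), (0,0), (2,0), (2,11)], [(1,9), (1,10), (1,11)], [(1,3), (1,4), (1,5), (1,6), (1,7), (1,8)]]
  | 1, 1, 2, 0 => [[(0,5), (0,6)], [(2,6), (2,7), (2,8)], [(1,5), (2,5), (2,4), (2,3)], [(1,6), (1,7), (1,8), (1,9)], [(0,7), (0,8), (0,9), (0,10), (0,11), (2,0), (2,1), (2,2)], [(0,4), (1,4), (1,3), (1,2), (1,1), (1,0), (1,11), (2,11), (2,10), (2,9)]]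
  | 1, 1, 2, 2 => [[(0,9), (0,10), (0,11), (2,11), (2,0), (2,1), (2,2)], [(1,2), (1,3), (1,4), (1,5), (1,6), (1,7)], [(2,7), (2,8), (2,9)], [(1,1), (1,0), (1,11), (1,10), (1,9)], [(0,8), (1,8)], [(0,1), (0,2), (0,3), (0,4), (0,5), (0,6), (0,7)]]
  | 1, 2, 2, 0 => [[(0,5), (0,6)], [(0,4), (0,3), (0,2), (0,1), (0,0), (1,0), (2,11), (2,10), (2,9), (2,8)], [(2,6), (2,7)], [(1,11), (0,11), (2,0), (2,1), (2,2), (2,3), (2,4), (2,5)], [(1,6), (1,7), (1,8), (1,9), (1,10)], [(0,7), (0,8), (0,9), (0,10)]]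
  | 1, 2, 2, 1 => [[(0,9), (2,9), (2,8), (2,7)], [(0,6), (0,7)], [(1,5), (1,6), (1,7)], [(2,2), (2,3), (2,4), (2,5), (2,6)], [(0,5), (0,4), (0,3), (1,3), (1,2), (1,1), (1,0), (2,11), (0,11), (0,10)], [(0,8), (1,8), (1,9), (1,10), (1,11), (2,0), (2,1)]]
  | 2, 0, 0, 1 => [[(1,8), (1,9)], [(1,5), (1,6), (1,7), (2,7)], [(2,8), (2,9), (2,10)], [(0,7), (0,8)], [(0,6), (0,5), (0,4), (0,3), (0,2), (0,1), (0,0), (1,11), (1,10)], [(0,9), (0,10), (0,11), (2,0), (2,1), (2,2), (1,2), (1,3), (1,4)]]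
  | 2, 0, 0, 2 => [[(1,4), (1,5), (1,6), (0,6), (0,7), (0,8), (1,8), (1,9), (1,10), (1,11)], [(0,2), (0,3), (0,4)], [(0,11), (2,0), (2,1), (2,2)], [(2,3), (2,4)], [(1,1), (0,1), (0,0), (2,11), (2,10), (2,9), (2,8), (2,7), (2,6), (2,5)], [(1,2), (1,3)]]
  | 2, 1, 0, 0 => [[(0,1), (0,0), (0,11), (0,10), (0,9), (0,8), (0,7), (0,6), (2,6)], [(2,3), (2,4), (2,5)], [(2,2), (2,1), (2,0), (1,11), (2,11)], [(1,4), (1,5), (1,6), (1,7), (2,7), (2,8), (2,9), (2,10)], [(0,2), (0,3), (0,4)], [(1,1), (1,2), (1,3)]]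
  | 2, 1, 0, 2 => [[(2,7), (2,8), (2,9), (2,10)], [(1,5), (1,6), (1,7)], [(0,7), (0,8), (0,9), (0,10), (0,11)], [(1,8), (1,9), (1,10), (1,11), (2,0), (1,0), (1,1), (1,2), (1,3), (2,3)], [(1,4), (0,4), (0,3), (0,2), (0,1), (0,0), (2,11)], [(0,6), (2,6), (2,5), (2,4)]]
  | 2, 2, 0, 0 => [[(0,4), (0,5), (0,6), (0,7), (0,8)], [(1,2), (1,3), (1,4), (1,5)], [(2,5), (2,6), (2,7), (2,8), (2,9)], [(1,6), (1,7), (1,8), (1,9), (1,10), (2,10), (2,11), (2,0), (2,1)], [(0,9), (0,10), (0,11), (0,0), (1,0), (1,1)], [(0,1), (0,2), (2,2), (2,3), (2,4)]]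
  | 2, 2, 0, 1 => [[(0,3), (0,4)], [(1,3), (2,3), (2,2), (2,1), (2,0), (2,11), (2,10), (2,9)], [(0,5), (0,6), (0,7), (0,8), (2,8)], [(1,4), (1,5)], [(2,4), (2,5)], [(0,2), (0,1), (0,0), (1,11), (1,10), (1,9), (1,8), (1,7), (1,6), (2,6)]]
  | 2, 0, 1, 1 => [[(0,5), (0,6)], [(2,6), (2,7), (2,8)], [(1,5), (2,5), (2,4), (2,3)], [(1,6), (1,7), (1,8), (1,9)], [(0,7), (0,8), (0,9), (0,10), (0,11), (2,0), (2,1), (2,2)], [(0,4), (1,4), (1,3), (1,2), (1,1), (1,0), (1,11), (2,11), (2,10), (2,9)]]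
  | 2, 0, 1, 2 => [[(0,5), (0,6)], [(0,4), (0,3), (0,2), (0,1), (0,0), (1,0), (2,11), (2,10), (2,9), (2,8)], [(2,6), (2,7)], [(1,11), (0,11), (2,0), (2,1), (2,2), (2,3), (2,4), (2,5)], [(1,6), (1,7), (1,8), (1,9), (1,10)], [(0,7), (0,8), (0,9), (0,10)]]
  | 2, 1, 1, 0 => [[(0,7), (0,8), (0,9)], [(1,9), (1,10)], [(0,6), (1,6), (1,5), (1,4), (2,4), (2,3), (2,2), (2,1), (2,0), (1,11)], [(0,10), (0,11), (1,0)], [(2,9), (2,10), (2,11)], [(1,1), (1,2), (1,3), (0,3), (0,4), (0,5), (2,5), (2,6), (2,7), (2,8), (1,8)]]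
  | 2, 1, 1, 2 => [[(0,9), (2,9), (2,8), (2,7)], [(0,6), (0,7)], [(1,5), (1,6), (1,7)], [(2,2), (2,3), (2,4), (2,5), (2,6)], [(0,5), (0,4), (0,3), (1,3), (1,2), (1,1), (1,0), (2,11), (0,11), (0,10)], [(0,8), (1,8), (1,9), (1,10), (1,11), (2,0), (2,1)]]
  | 2, 2, 1, 0 => [[(2,8), (2,9), (2,10)], [(0,10), (0,11), (1,0), (1,1), (1,2)], [(0,3), (0,4), (0,5), (0,6), (0,7), (0,8), (0,9)], [(2,3), (2,2), (0,2), (0,1), (0,0), (2,0), (2,11)], [(1,9), (1,10), (1,11)], [(1,3), (1,4), (1,5), (1,6), (1,7), (1,8)]]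
  | 2, 2, 1, 1 => [[(0,9), (0,10), (0,11), (2,11), (2,0), (2,1), (2,2)], [(1,2), (1,3), (1,4), (1,5), (1,6), (1,7)], [(2,7), (2,8), (2,9)], [(1,1), (1,0), (1,11), (1,10), (1,9)], [(0,8), (1,8)], [(0,1), (0,2), (0,3), (0,4), (0,5), (0,6), (0,7)]]
  | _, _, _, _ => []

def bs (α₁ β₁ α₂ β₂ : Fin 3) : Fin 6 → List (Fin 3 × Fin 12) :=
  fun u => (bsets α₁.val β₁.val α₂.val β₂.val).getD u.val []

abbrev Cond (α₁ β₁ α₂ β₂ : Fin 3) : Prop :=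
  (∀ u, bs α₁ β₁ α₂ β₂ u ≠ []) ∧
  (∀ u, ChainP (linkedCylinder12 3 α₁ β₁ α₂ β₂).Adj (bs α₁ β₁ α₂ β₂ u)) ∧
  (∀ u v : Fin 6, u ≠ v → ∀ x ∈ bs α₁ β₁ α₂ β₂ u, x ∉ bs α₁ β₁ α₂ β₂ v) ∧
  (∀ u v : Fin 6, u ≠ v → ∃ x ∈ bs α₁ β₁ α₂ β₂ u, ∃ y ∈ bs α₁ β₁ α₂ β₂ v,
    (linkedCylinder12 3 α₁ β₁ α₂ β₂).Adj x y)
lemma cond_0011 : Cond 0 0 1 1 := by decide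
lemma cond_0012 : Cond 0 0 1 2 := by decide
lemma cond_0110 : Cond 0 1 1 0 := by decide
lemma cond_0112 : Cond 0 1 1 2 := by decide
lemma cond_0210 : Cond 0 2 1 0 := by decide
lemma cond_0211 : Cond 0 2 1 1 := by decide
lemma cond_0021 : Cond 0 0 2 1 := by decide
lemma cond_0022 : Cond 0 0 2 2 := by decide
lemma cond_0120 : Cond 0 1 2 0 := by decide
lemma cond_0122 : Cond 0 1 2 2 := by decide
lemma cond_0220 : Cond 0 2 2 0 := by decide
lemma cond_0221 : Cond 0 2 2 1 := by decide
lemma cond_1001 : Cond 1 0 0 1 := by decide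
lemma cond_1002 : Cond 1 0 0 2 := by decide
lemma cond_1100 : Cond 1 1 0 0 := by decide
lemma cond_1102 : Cond 1 1 0 2 := by decide
lemma cond_1200 : Cond 1 2 0 0 := by decide
lemma cond_1201 : Cond 1 2 0 1 := by decide
lemma cond_1021 : Cond 1 0 2 1 := by decide
lemma cond_1022 : Cond 1 0 2 2 := by decide
lemma cond_1120 : Cond 1 1 2 0 := by decide
lemma cond_1122 : Cond 1 1 2 2 := by decide
lemma cond_1220 : Cond 1 2 2 0 := by decide
lemma cond_1221 : Cond 1 2 2 1 := by decide
lemma cond_2001 : Cond 2 0 0 1 := by decide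
lemma cond_2002 : Cond 2 0 0 2 := by decide
lemma cond_2100 : Cond 2 1 0 0 := by decide
lemma cond_2102 : Cond 2 1 0 2 := by decide
lemma cond_2200 : Cond 2 2 0 0 := by decide
lemma cond_2201 : Cond 2 2 0 1 := by decide
lemma cond_2011 : Cond 2 0 1 1 := by decide
lemma cond_2012 : Cond 2 0 1 2 := by decide
lemma cond_2110 : Cond 2 1 1 0 := by decide
lemma cond_2112 : Cond 2 1 1 2 := by decide
lemma cond_2210 : Cond 2 2 1 0 := by decide
lemma cond_2211 : Cond 2 2 1 1 := by decide

lemma condall (α₁ β₁ α₂ β₂ : Fin 3) (ha : α₁ ≠ α₂) (hb : β₁ ≠ β₂) :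
    Cond α₁ β₁ α₂ β₂ := by
  fin_cases α₁ <;> fin_cases β₁ <;> fin_cases α₂ <;> fin_cases β₂ <;>
    first
      | exact absurd rfl ha
      | exact absurd rfl hb
      | exact cond_0011
      | exact cond_0012
      | exact cond_0110
      | exact cond_0112
      | exact cond_0210
      | exact cond_0211
      | exact cond_0021
      | exact cond_0022
      | exact cond_0120
      | exact cond_0122
      | exact cond_0220
      | exact cond_0221
      | exact cond_1001
      | exact cond_1002
      | exact cond_1100
      | exact cond_1102
      | exact cond_1200
      | exact cond_1201
      | exact cond_1021
      | exact cond_1022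
      | exact cond_1120
      | exact cond_1122
      | exact cond_1220
      | exact cond_1221
      | exact cond_2001
      | exact cond_2002
      | exact cond_2100
      | exact cond_2102
      | exact cond_2200
      | exact cond_2201
      | exact cond_2011
      | exact cond_2012
      | exact cond_2110
      | exact cond_2112
      | exact cond_2210
      | exact cond_2211

lemma cylBase (α₁ β₁ α₂ β₂ : Fin 3) (ha : α₁ ≠ α₂) (hb : β₁ ≠ β₂) :
    HasMinor (linkedCylinder12 3 α₁ β₁ α₂ β₂) (⊤ : SimpleGraph (Fin 6)) := by
  obtain ⟨h1, h2, h3, h4⟩ := condall α₁ β₁ α₂ β₂ ha hb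
  exact hasMinor_of_lists _ (bs α₁ β₁ α₂ β₂) h1 (fun u => (h2 u).chain') h3 h4
/-- count of cuts `≤ i`. -/
def cnt (c1 c2 c3 i : ℕ) : ℕ :=
  (if c1 ≤ i then 1 else 0) + (if c2 ≤ i then 1 else 0) + (if c3 ≤ i then 1 else 0)

lemma exists_cuts (k a1 a2 b1 b2 : ℕ) (hk : 3 ≤ k) (ha1 : a1 < k) (ha2 : a2 < k)
    (hb1 : b1 < k) (hb2 : b2 < k) (ha : a1 ≠ a2) (hb : b1 ≠ b2) :
    ∃ c1 c2 c3 : ℕ, c1 < c2 ∧ c2 < c3 ∧ c3 < k ∧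
      cnt c1 c2 c3 a1 % 3 ≠ cnt c1 c2 c3 a2 % 3 ∧
      cnt c1 c2 c3 b1 % 3 ≠ cnt c1 c2 c3 b2 % 3 := by
  rcases lt_trichotomy (max a1 a2) (max b1 b2) with h | h | h
  · exact ⟨0, max a1 a2, max b1 b2, by omega, by omega, by omega,
      by simp only [cnt]; split_ifs <;> omega,
      by simp only [cnt]; split_ifs <;> omega⟩
  · rcases eq_or_lt_of_le (show 1 ≤ max a1 a2 by omega) with h1 | h1
    · exact ⟨0, 1, 2, by omega, by omega, by omega,
        by simp only [cnt]; split_ifs <;> omega,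
        by simp only [cnt]; split_ifs <;> omega⟩
    · exact ⟨0, 1, max a1 a2, by omega, by omega, by omega,
        by simp only [cnt]; split_ifs <;> omega,
        by simp only [cnt]; split_ifs <;> omega⟩
  · exact ⟨0, max b1 b2, max a1 a2, by omega, by omega, by omega,
      by simp only [cnt]; split_ifs <;> omega,
      by simp only [cnt]; split_ifs <;> omega⟩

def arcMap (c1 c2 c3 k : ℕ) : Fin k → Fin 3 :=
  fun i => ⟨cnt c1 c2 c3 i.val % 3, by omega⟩

def gMap (c1 c2 c3 k : ℕ) : Fin k × Fin 12 → Fin 3 × Fin 12 :=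
  fun p => (arcMap c1 c2 c3 k p.1, p.2)

section CylAdj
variable {k : ℕ} (a₁ b₁ a₂ b₂ : Fin k)

lemma cyl_adj_vert (i : Fin k) (j j' : Fin 12) (h : (j : ℕ) + 1 = (j' : ℕ)) :
    (linkedCylinder12 k a₁ b₁ a₂ b₂).Adj (i, j) (i, j') := by
  refine ⟨?_, Or.inl (Or.inl ⟨rfl, h⟩)⟩
  intro e
  rw [Prod.mk.injEq] at e
  have := congrArg Fin.val e.2
  omega

lemma cyl_adj_row (i i' : Fin k) (j : Fin 12) (h : ((i : ℕ) + 1) % k = (i' : ℕ))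
    (hne : (i : ℕ) ≠ (i' : ℕ)) :
    (linkedCylinder12 k a₁ b₁ a₂ b₂).Adj (i, j) (i', j) := by
  refine ⟨?_, Or.inl (Or.inr (Or.inl ⟨rfl, h⟩))⟩
  intro e
  rw [Prod.mk.injEq] at e
  exact hne (congrArg Fin.val e.1)

lemma cyl_adj_link1 : (linkedCylinder12 k a₁ b₁ a₂ b₂).Adj (a₁, 0) (b₁, 11) := by
  refine ⟨?_, Or.inl (Or.inr (Or.inr (Or.inl ⟨rfl, rfl⟩)))⟩
  intro e
  rw [Prod.mk.injEq] at e
  exact absurd e.2 (by decide)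

lemma cyl_adj_link2 : (linkedCylinder12 k a₁ b₁ a₂ b₂).Adj (a₂, 0) (b₂, 11) := by
  refine ⟨?_, Or.inl (Or.inr (Or.inr (Or.inr ⟨rfl, rfl⟩)))⟩
  intro e
  rw [Prod.mk.injEq] at e
  exact absurd e.2 (by decide)

lemma reach_row (S : Set (Fin k × Fin 12)) (j : Fin 12) :
    ∀ (d lo : ℕ) (hd : lo + d < k)
      (hsub : ∀ t : ℕ, lo ≤ t → t ≤ lo + d → ∀ h : t < k, ((⟨t, h⟩ : Fin k), j) ∈ S),
      ((linkedCylinder12 k a₁ b₁ a₂ b₂).induce S).Reachable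
        ⟨(⟨lo, by omega⟩, j), hsub lo le_rfl (Nat.le_add_right _ _) _⟩
        ⟨(⟨lo + d, hd⟩, j), hsub _ (Nat.le_add_right _ _) le_rfl _⟩ := by
  intro d
  induction d with
  | zero => intro lo hd hsub; exact SimpleGraph.Reachable.refl _
  | succ d ih =>
    intro lo hd hsub
    have hd' : lo + d < k := by omega
    have r1 := ih lo hd' (fun t h1 h2 h => hsub t h1 (by omega) h)
    have hadj : (linkedCylinder12 k a₁ b₁ a₂ b₂).Adj ((⟨lo + d, hd'⟩ : Fin k), j)
        ((⟨lo + d + 1, hd⟩ : Fin k), j) := by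
      apply cyl_adj_row
      · show (lo + d + 1) % k = lo + d + 1
        exact Nat.mod_eq_of_lt hd
      · show lo + d ≠ lo + d + 1
        omega
    have r2 : ((linkedCylinder12 k a₁ b₁ a₂ b₂).induce S).Adj
        ⟨((⟨lo + d, hd'⟩ : Fin k), j), hsub _ (by omega) (by omega) _⟩
        ⟨((⟨lo + d + 1, hd⟩ : Fin k), j), hsub _ (by omega) le_rfl _⟩ := hadj
    exact r1.trans r2.reachable

lemma reach_row' (S : Set (Fin k × Fin 12)) (j : Fin 12) (lo hi : ℕ) (hlo : lo ≤ hi)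
    (hhi : hi < k)
    (hsub : ∀ t : ℕ, lo ≤ t → t ≤ hi → ∀ h : t < k, ((⟨t, h⟩ : Fin k), j) ∈ S) :
    ((linkedCylinder12 k a₁ b₁ a₂ b₂).induce S).Reachable
      ⟨(⟨lo, by omega⟩, j), hsub lo le_rfl hlo _⟩
      ⟨(⟨hi, hhi⟩, j), hsub hi hlo le_rfl _⟩ := by
  have h := reach_row a₁ b₁ a₂ b₂ S j (hi - lo) lo (by omega)
    (fun t h1 h2 h => hsub t h1 (by omega) h)
  have e : (⟨((⟨lo + (hi - lo), by omega⟩ : Fin k), j),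
      hsub _ (Nat.le_add_right _ _) (by omega) _⟩ : {x // x ∈ S}) =
      ⟨((⟨hi, hhi⟩ : Fin k), j), hsub hi hlo le_rfl _⟩ := by
    apply Subtype.ext
    rw [Prod.mk.injEq]
    exact ⟨Fin.ext (show lo + (hi - lo) = hi by omega), rfl⟩
  rw [e] at h
  exact h
end CylAdj
section Fib
variable {k : ℕ} (a₁ b₁ a₂ b₂ : Fin k) (c1 c2 c3 : ℕ)

lemma fib_conn (hk : 3 ≤ k) (h12 : c1 < c2) (h23 : c2 < c3) (h3k : c3 < k)
    (w : Fin 3 × Fin 12) :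
    ((linkedCylinder12 k a₁ b₁ a₂ b₂).induce (gMap c1 c2 c3 k ⁻¹' {w})).Connected := by
  obtain ⟨c, j⟩ := w
  set S : Set (Fin k × Fin 12) := gMap c1 c2 c3 k ⁻¹' {(c, j)} with hS
  have hmem : ∀ (t : ℕ) (h : t < k) (j' : Fin 12),
      (((⟨t, h⟩ : Fin k), j') ∈ S ↔ (cnt c1 c2 c3 t % 3 = (c : ℕ) ∧ j' = j)) := by
    intro t h j'
    simp only [hS, gMap, arcMap, Set.mem_preimage, Set.mem_singleton_iff,
      Prod.mk.injEq, Fin.ext_iff]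
  have hmem' : ∀ p : Fin k × Fin 12, p ∈ S →
      (cnt c1 c2 c3 (p.1 : ℕ) % 3 = (c : ℕ) ∧ p.2 = j) := by
    intro ⟨i, j'⟩ hp
    exact (hmem i.val i.isLt j').mp (by simpa using hp)
  -- pick a base vertex for each value of c
  have hbase : ∃ base : ℕ, ∃ hb : base < k, ∃ hbS : ((⟨base, hb⟩ : Fin k), j) ∈ S,
      (∀ (i : Fin k) (hi : (i, j) ∈ S),
        ((linkedCylinder12 k a₁ b₁ a₂ b₂).induce S).Reachable
          ⟨(i, j), hi⟩ ⟨((⟨base, hb⟩ : Fin k), j), hbS⟩) := by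
    have hc : (c : ℕ) = 0 ∨ (c : ℕ) = 1 ∨ (c : ℕ) = 2 := by omega
    rcases hc with hc | hc | hc
    · -- base = k - 1
      have hbk : k - 1 < k := by omega
      have hbS : ((⟨k - 1, hbk⟩ : Fin k), j) ∈ S := by
        rw [hmem]
        refine ⟨?_, rfl⟩
        simp only [cnt]
        split_ifs <;> omega
      refine ⟨k - 1, hbk, hbS, ?_⟩
      intro i hi
      have hci := (hmem' _ hi).1
      have hcases : (i : ℕ) < c1 ∨ c3 ≤ (i : ℕ) := by
        revert hci
        simp only [cnt]
        split_ifs <;> omega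
      rcases hcases with hlt | hge
      · -- i < c1 : reach (0,j) - (i,j), and edge (k-1,j)-(0,j)
        have hc1pos : 0 < c1 := by omega
        have hsub : ∀ t : ℕ, 0 ≤ t → t ≤ (i : ℕ) → ∀ h : t < k, ((⟨t, h⟩ : Fin k), j) ∈ S := by
          intro t _ h2 h
          rw [hmem]
          refine ⟨?_, rfl⟩
          simp only [cnt]
          split_ifs <;> omega
        have r1 := reach_row' a₁ b₁ a₂ b₂ S j 0 (i : ℕ) (Nat.zero_le _) i.isLt hsub
        have h0S : ((⟨0, by omega⟩ : Fin k), j) ∈ S := hsub 0 le_rfl (Nat.zero_le _) _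
        have hadj : (linkedCylinder12 k a₁ b₁ a₂ b₂).Adj ((⟨k - 1, hbk⟩ : Fin k), j)
            ((⟨0, by omega⟩ : Fin k), j) := by
          apply cyl_adj_row
          · show (k - 1 + 1) % k = 0
            rw [Nat.sub_add_cancel (by omega)]
            exact Nat.mod_self k
          · show k - 1 ≠ 0
            omega
        have r2 : ((linkedCylinder12 k a₁ b₁ a₂ b₂).induce S).Adj
            ⟨((⟨k - 1, hbk⟩ : Fin k), j), hbS⟩ ⟨((⟨0, by omega⟩ : Fin k), j), h0S⟩ := hadj
        have r1' : ((linkedCylinder12 k a₁ b₁ a₂ b₂).induce S).Reachable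
            ⟨((⟨0, by omega⟩ : Fin k), j), h0S⟩ ⟨(i, j), hi⟩ := by
          have e : (⟨((⟨(i : ℕ), i.isLt⟩ : Fin k), j), hsub _ (Nat.zero_le _) le_rfl _⟩ :
              {x // x ∈ S}) = ⟨(i, j), hi⟩ := by
            apply Subtype.ext
            rw [Prod.mk.injEq]
            exact ⟨Fin.ext rfl, rfl⟩
          rw [e] at r1
          exact r1
        exact (r1'.symm).trans r2.reachable.symm
      · -- c3 ≤ i : reach (i,j) - (k-1,j)
        have hsub : ∀ t : ℕ, (i : ℕ) ≤ t → t ≤ k - 1 → ∀ h : t < k,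
            ((⟨t, h⟩ : Fin k), j) ∈ S := by
          intro t h1 h2 h
          rw [hmem]
          refine ⟨?_, rfl⟩
          simp only [cnt]
          split_ifs <;> omega
        have r1 := reach_row' a₁ b₁ a₂ b₂ S j (i : ℕ) (k - 1) (by omega) hbk hsub
        have e : (⟨((⟨(i : ℕ), by omega⟩ : Fin k), j), hsub _ le_rfl (by omega) _⟩ :
            {x // x ∈ S}) = ⟨(i, j), hi⟩ := by
          apply Subtype.ext
          rw [Prod.mk.injEq]
          exact ⟨Fin.ext rfl, rfl⟩
        rw [e] at r1
        exact r1
    · -- c = 1, base = c1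
      have hbk : c1 < k := by omega
      have hbS : ((⟨c1, hbk⟩ : Fin k), j) ∈ S := by
        rw [hmem]
        refine ⟨?_, rfl⟩
        simp only [cnt]
        split_ifs <;> omega
      refine ⟨c1, hbk, hbS, ?_⟩
      intro i hi
      have hci := (hmem' _ hi).1
      have hcases : c1 ≤ (i : ℕ) ∧ (i : ℕ) < c2 := by
        revert hci
        simp only [cnt]
        split_ifs <;> omega
      have hsub : ∀ t : ℕ, c1 ≤ t → t ≤ (i : ℕ) → ∀ h : t < k, ((⟨t, h⟩ : Fin k), j) ∈ S := by
        intro t h1 h2 h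
        rw [hmem]
        refine ⟨?_, rfl⟩
        simp only [cnt]
        split_ifs <;> omega
      have r1 := reach_row' a₁ b₁ a₂ b₂ S j c1 (i : ℕ) hcases.1 i.isLt hsub
      have e : (⟨((⟨(i : ℕ), i.isLt⟩ : Fin k), j), hsub _ hcases.1 le_rfl _⟩ :
          {x // x ∈ S}) = ⟨(i, j), hi⟩ := by
        apply Subtype.ext
        rw [Prod.mk.injEq]
        exact ⟨Fin.ext rfl, rfl⟩
      rw [e] at r1
      exact r1.symm
    · -- c = 2, base = c2
      have hbk : c2 < k := by omega
      have hbS : ((⟨c2, hbk⟩ : Fin k), j) ∈ S := by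
        rw [hmem]
        refine ⟨?_, rfl⟩
        simp only [cnt]
        split_ifs <;> omega
      refine ⟨c2, hbk, hbS, ?_⟩
      intro i hi
      have hci := (hmem' _ hi).1
      have hcases : c2 ≤ (i : ℕ) ∧ (i : ℕ) < c3 := by
        revert hci
        simp only [cnt]
        split_ifs <;> omega
      have hsub : ∀ t : ℕ, c2 ≤ t → t ≤ (i : ℕ) → ∀ h : t < k, ((⟨t, h⟩ : Fin k), j) ∈ S := by
        intro t h1 h2 h
        rw [hmem]
        refine ⟨?_, rfl⟩
        simp only [cnt]
        split_ifs <;> omega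
      have r1 := reach_row' a₁ b₁ a₂ b₂ S j c2 (i : ℕ) hcases.1 i.isLt hsub
      have e : (⟨((⟨(i : ℕ), i.isLt⟩ : Fin k), j), hsub _ hcases.1 le_rfl _⟩ :
          {x // x ∈ S}) = ⟨(i, j), hi⟩ := by
        apply Subtype.ext
        rw [Prod.mk.injEq]
        exact ⟨Fin.ext rfl, rfl⟩
      rw [e] at r1
      exact r1.symm
  obtain ⟨base, hbk, hbS, hreach⟩ := hbase
  rw [SimpleGraph.connected_iff]
  constructor
  · rintro ⟨⟨i, j'⟩, hp⟩ ⟨⟨i', j''⟩, hp'⟩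
    obtain ⟨-, hj'⟩ := hmem' _ hp
    obtain ⟨-, hj''⟩ := hmem' _ hp'
    subst hj'
    subst hj''
    exact (hreach i hp).trans (hreach i' hp').symm
  · exact ⟨⟨_, hbS⟩⟩
end Fib
section Lift
variable {k : ℕ} (a₁ b₁ a₂ b₂ : Fin k) (c1 c2 c3 : ℕ)

lemma arc_val (i : Fin k) : (arcMap c1 c2 c3 k i : ℕ) = cnt c1 c2 c3 (i : ℕ) % 3 := rfl

lemma arc_rep (hk : 3 ≤ k) (h12 : c1 < c2) (h23 : c2 < c3) (h3k : c3 < k) (c : Fin 3) :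
    ∃ i : Fin k, arcMap c1 c2 c3 k i = c := by
  have hc : (c : ℕ) = 0 ∨ (c : ℕ) = 1 ∨ (c : ℕ) = 2 := by omega
  rcases hc with hc | hc | hc
  · exact ⟨⟨c3, by omega⟩, Fin.ext (by
      rw [arc_val, hc]; simp only [cnt]; split_ifs <;> omega)⟩
  · exact ⟨⟨c1, by omega⟩, Fin.ext (by
      rw [arc_val, hc]; simp only [cnt]; split_ifs <;> omega)⟩
  · exact ⟨⟨c2, by omega⟩, Fin.ext (by
      rw [arc_val, hc]; simp only [cnt]; split_ifs <;> omega)⟩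

lemma arc_step (hk : 3 ≤ k) (h12 : c1 < c2) (h23 : c2 < c3) (h3k : c3 < k) (c c' : Fin 3)
    (hcc : ((c : ℕ) + 1) % 3 = (c' : ℕ)) :
    ∃ i i' : Fin k, arcMap c1 c2 c3 k i = c ∧ arcMap c1 c2 c3 k i' = c' ∧
      ((i : ℕ) + 1) % k = (i' : ℕ) ∧ (i : ℕ) ≠ (i' : ℕ) := by
  have hc : (c : ℕ) = 0 ∨ (c : ℕ) = 1 ∨ (c : ℕ) = 2 := by omega
  rcases hc with hc | hc | hc
  · -- c = 0, c' = 1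
    have hc' : (c' : ℕ) = 1 := by omega
    rcases Nat.eq_zero_or_pos c1 with h0 | h0
    · refine ⟨⟨k - 1, by omega⟩, ⟨0, by omega⟩, Fin.ext ?_, Fin.ext ?_, ?_, ?_⟩
      · rw [arc_val, hc]; simp only [cnt]; split_ifs <;> omega
      · rw [arc_val, hc']; simp only [cnt]; split_ifs <;> omega
      · show (k - 1 + 1) % k = 0
        rw [Nat.sub_add_cancel (by omega)]
        exact Nat.mod_self k
      · show k - 1 ≠ 0
        omega
    · refine ⟨⟨c1 - 1, by omega⟩, ⟨c1, by omega⟩, Fin.ext ?_, Fin.ext ?_, ?_, ?_⟩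
      · rw [arc_val, hc]; simp only [cnt]; split_ifs <;> omega
      · rw [arc_val, hc']; simp only [cnt]; split_ifs <;> omega
      · show (c1 - 1 + 1) % k = c1
        rw [Nat.sub_add_cancel (by omega)]
        exact Nat.mod_eq_of_lt (by omega)
      · show c1 - 1 ≠ c1
        omega
  · -- c = 1, c' = 2
    have hc' : (c' : ℕ) = 2 := by omega
    refine ⟨⟨c2 - 1, by omega⟩, ⟨c2, by omega⟩, Fin.ext ?_, Fin.ext ?_, ?_, ?_⟩
    · rw [arc_val, hc]; simp only [cnt]; split_ifs <;> omega
    · rw [arc_val, hc']; simp only [cnt]; split_ifs <;> omega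
    · show (c2 - 1 + 1) % k = c2
      rw [Nat.sub_add_cancel (by omega)]
      exact Nat.mod_eq_of_lt (by omega)
    · show c2 - 1 ≠ c2
      omega
  · -- c = 2, c' = 0
    have hc' : (c' : ℕ) = 0 := by omega
    refine ⟨⟨c3 - 1, by omega⟩, ⟨c3, by omega⟩, Fin.ext ?_, Fin.ext ?_, ?_, ?_⟩
    · rw [arc_val, hc]; simp only [cnt]; split_ifs <;> omega
    · rw [arc_val, hc']; simp only [cnt]; split_ifs <;> omega
    · show (c3 - 1 + 1) % k = c3
      rw [Nat.sub_add_cancel (by omega)]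
      exact Nat.mod_eq_of_lt (by omega)
    · show c3 - 1 ≠ c3
      omega

lemma lift_adj (hk : 3 ≤ k) (h12 : c1 < c2) (h23 : c2 < c3) (h3k : c3 < k) :
    ∀ w₁ w₂ : Fin 3 × Fin 12,
      (linkedCylinder12 3 (arcMap c1 c2 c3 k a₁) (arcMap c1 c2 c3 k b₁)
        (arcMap c1 c2 c3 k a₂) (arcMap c1 c2 c3 k b₂)).Adj w₁ w₂ →
      ∃ v₁ v₂ : Fin k × Fin 12, gMap c1 c2 c3 k v₁ = w₁ ∧ gMap c1 c2 c3 k v₂ = w₂ ∧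
        (linkedCylinder12 k a₁ b₁ a₂ b₂).Adj v₁ v₂ := by
  have main : ∀ w₁ w₂ : Fin 3 × Fin 12,
      ((w₁.1 = w₂.1 ∧ (w₁.2 : ℕ) + 1 = (w₂.2 : ℕ)) ∨
       (w₁.2 = w₂.2 ∧ ((w₁.1 : ℕ) + 1) % 3 = (w₂.1 : ℕ)) ∨
       (w₁ = (arcMap c1 c2 c3 k a₁, 0) ∧ w₂ = (arcMap c1 c2 c3 k b₁, 11)) ∨
       (w₁ = (arcMap c1 c2 c3 k a₂, 0) ∧ w₂ = (arcMap c1 c2 c3 k b₂, 11))) →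
      ∃ v₁ v₂ : Fin k × Fin 12, gMap c1 c2 c3 k v₁ = w₁ ∧ gMap c1 c2 c3 k v₂ = w₂ ∧
        (linkedCylinder12 k a₁ b₁ a₂ b₂).Adj v₁ v₂ := by
    rintro ⟨cA, jA⟩ ⟨cB, jB⟩ (⟨hcol, hrow⟩ | ⟨hrow, hcol⟩ | ⟨hA, hB⟩ | ⟨hA, hB⟩)
    · obtain ⟨i, hi⟩ := arc_rep c1 c2 c3 hk h12 h23 h3k cA
      refine ⟨(i, jA), (i, jB), ?_, ?_, cyl_adj_vert a₁ b₁ a₂ b₂ i jA jB hrow⟩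
      · simp only [gMap]; rw [hi]
      · simp only [gMap]; rw [hi]
        exact congrArg (fun c => (c, jB)) hcol
    · obtain ⟨i, i', hi, hi', hstep, hne⟩ :=
        arc_step c1 c2 c3 hk h12 h23 h3k cA cB hcol
      refine ⟨(i, jA), (i', jA), ?_, ?_, cyl_adj_row a₁ b₁ a₂ b₂ i i' jA hstep hne⟩
      · simp only [gMap]; rw [hi]
      · simp only [gMap]; rw [hi']
        exact congrArg (fun j => (cB, j)) hrow
    · refine ⟨(a₁, 0), (b₁, 11), ?_, ?_, cyl_adj_link1 a₁ b₁ a₂ b₂⟩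
      · simp only [gMap]; rw [hA]
      · simp only [gMap]; rw [hB]
    · refine ⟨(a₂, 0), (b₂, 11), ?_, ?_, cyl_adj_link2 a₁ b₁ a₂ b₂⟩
      · simp only [gMap]; rw [hA]
      · simp only [gMap]; rw [hB]
  intro w₁ w₂ hadj
  obtain ⟨-, hrel | hrel⟩ := hadj
  · exact main w₁ w₂ hrel
  · obtain ⟨v₂, v₁, h2, h1, hA⟩ := main w₂ w₁ hrel
    exact ⟨v₁, v₂, h1, h2, hA.symm⟩
end Lift

/-- for every k ≥ 3, a linked k-cylinder of length twelve
(the two linking edges having no common end) has a K₆ minor. -/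
theorem linkedCylinder12_hasK6Minor (k : ℕ) (hk : 3 ≤ k) (a₁ b₁ a₂ b₂ : Fin k)
    (ha : a₁ ≠ a₂) (hb : b₁ ≠ b₂) :
    HasMinor (linkedCylinder12 k a₁ b₁ a₂ b₂) (⊤ : SimpleGraph (Fin 6)) := by
  have hav : (a₁ : ℕ) ≠ (a₂ : ℕ) := fun h => ha (Fin.ext h)
  have hbv : (b₁ : ℕ) ≠ (b₂ : ℕ) := fun h => hb (Fin.ext h)
  obtain ⟨c1, c2, c3, h12, h23, h3k, hca, hcb⟩ :=
    exists_cuts k a₁ a₂ b₁ b₂ hk a₁.isLt a₂.isLt b₁.isLt b₂.isLt hav hbv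
  refine hasMinor_pullback (gMap c1 c2 c3 k)
    (fib_conn a₁ b₁ a₂ b₂ c1 c2 c3 hk h12 h23 h3k)
    (lift_adj a₁ b₁ a₂ b₂ c1 c2 c3 hk h12 h23 h3k)
    (cylBase (arcMap c1 c2 c3 k a₁) (arcMap c1 c2 c3 k b₁) (arcMap c1 c2 c3 k a₂)
      (arcMap c1 c2 c3 k b₂) ?_ ?_)
  · intro h
    exact hca (congrArg Fin.val h)
  · intro h
    exact hcb (congrArg Fin.val h)
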